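/- The gradient of the ICCL loss L_iccl = log ∑_j exp(q̃₁_j/τ₁) − ∑_i p(i|z₂,τ₂)·(q̃₁_i/τ₁) with respect to q̃₁ equals (1/τ₁)(P(q̃₁,τ₁) − P(z₂,τ₂)), and its squared gradient norm with respect to q₁ equals (‖P(q̃₁,τ₁) − P(z₂,τ₂)‖²/(τ₁²‖q₁‖²))·(1 − ⟨q̃₁, d/‖d‖⟩²) where d = P(q̃₁,τ₁) − P(z₂,τ₂) (assuming d ≠ 0). -/

import Mathlib

open scoped BigOperators
open RealInnerProductSpace

noncomputable def softmax11 {C : ℕ} (τ : ℝ) (x : EuclideanSpace ℝ (Fin C)) :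
    EuclideanSpace ℝ (Fin C) :=
  WithLp.toLp 2 (fun i => Real.exp (x i / τ) / ∑ j, Real.exp (x j / τ))

lemma core_hasFDerivAt {C : ℕ} (hC : 1 ≤ C) (τ₁ : ℝ) (hτ₁ : 0 < τ₁)
    (p x : EuclideanSpace ℝ (Fin C)) :
    HasFDerivAt (fun u : EuclideanSpace ℝ (Fin C) =>
        Real.log (∑ j, Real.exp (u j / τ₁)) - ⟪p, u⟫ / τ₁)
      (InnerProductSpace.toDual ℝ _ ((1 / τ₁) • (softmax11 τ₁ x - p))) x := by
  haveI : Nonempty (Fin C) := Fin.pos_iff_nonempty.mp hC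
  set S : EuclideanSpace ℝ (Fin C) → ℝ := fun u => ∑ j, Real.exp (u j / τ₁) with hS
  have hSpos : 0 < S x :=
    Finset.sum_pos (fun j _ => Real.exp_pos _) Finset.univ_nonempty
  have hterm : ∀ j : Fin C, HasFDerivAt (fun u : EuclideanSpace ℝ (Fin C) =>
      Real.exp (u j / τ₁))
      (Real.exp (x j / τ₁) • (τ₁⁻¹ • (EuclideanSpace.proj j : EuclideanSpace ℝ (Fin C) →L[ℝ] ℝ))) x := by
    intro j
    have h1 : HasFDerivAt (fun u : EuclideanSpace ℝ (Fin C) => u j / τ₁)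
        (τ₁⁻¹ • (EuclideanSpace.proj j : EuclideanSpace ℝ (Fin C) →L[ℝ] ℝ)) x := by
      simpa only [div_eq_mul_inv, PiLp.proj_apply] using
        ((EuclideanSpace.proj (𝕜 := ℝ) j).hasFDerivAt (x := x)).mul_const τ₁⁻¹
    simpa [Function.comp_def] using (Real.hasDerivAt_exp (x j / τ₁)).comp_hasFDerivAt x h1
  have hSum : HasFDerivAt S
      (∑ j, Real.exp (x j / τ₁) • (τ₁⁻¹ • (EuclideanSpace.proj j : EuclideanSpace ℝ (Fin C) →L[ℝ] ℝ))) x :=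
    HasFDerivAt.fun_sum (fun j _ => hterm j)
  have hlog : HasFDerivAt (fun u => Real.log (S u))
      ((S x)⁻¹ • ∑ j, Real.exp (x j / τ₁) • (τ₁⁻¹ • (EuclideanSpace.proj j : EuclideanSpace ℝ (Fin C) →L[ℝ] ℝ))) x := by
    simpa [div_eq_inv_mul, Function.comp_def] using (Real.hasDerivAt_log hSpos.ne').comp_hasFDerivAt x hSum
  have hlin : HasFDerivAt (fun u : EuclideanSpace ℝ (Fin C) => ⟪p, u⟫ / τ₁)
      (τ₁⁻¹ • (innerSL ℝ p)) x := by
    simpa [div_eq_inv_mul, mul_comm, Pi.smul_def] using ((τ₁⁻¹ • (innerSL ℝ p)).hasFDerivAt (x := x))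
  have := hlog.sub hlin
  refine this.congr_fderiv (Eq.symm ?_)
  ext h
  simp only [InnerProductSpace.toDual_apply_apply, ContinuousLinearMap.sub_apply,
    ContinuousLinearMap.smul_apply, ContinuousLinearMap.sum_apply, innerSL_apply_apply]
  rw [inner_smul_left, inner_sub_left]
  have hpa : ∀ (i : Fin C) (v : EuclideanSpace ℝ (Fin C)),
      (EuclideanSpace.proj (𝕜 := ℝ) i) v = v i := fun _ _ => rfl
  simp only [PiLp.inner_apply, RCLike.inner_apply, conj_trivial, softmax11,
    hpa, smul_eq_mul]
  rw [one_div, mul_sub]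
  congr 1
  rw [Finset.mul_sum, Finset.mul_sum]
  exact Finset.sum_congr rfl (fun i _ => by rw [div_eq_mul_inv]; ring)

theorem stmt_11 {C : ℕ} (hC : 1 ≤ C) (τ₁ τ₂ : ℝ) (hτ₁ : 0 < τ₁) (hτ₂ : 0 < τ₂)
    (q₁ z₂ : EuclideanSpace ℝ (Fin C)) (hq : q₁ ≠ 0)
    (d : EuclideanSpace ℝ (Fin C))
    (hd : d = softmax11 τ₁ (‖q₁‖⁻¹ • q₁) - softmax11 τ₂ z₂) (hd0 : d ≠ 0) :
    gradient (fun u : EuclideanSpace ℝ (Fin C) =>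
        Real.log (∑ j, Real.exp (u j / τ₁)) - ⟪softmax11 τ₂ z₂, u⟫ / τ₁)
        (‖q₁‖⁻¹ • q₁)
      = (1 / τ₁) • d ∧
    ‖gradient (fun q : EuclideanSpace ℝ (Fin C) =>
        Real.log (∑ j, Real.exp ((‖q‖⁻¹ • q) j / τ₁))
          - ⟪softmax11 τ₂ z₂, ‖q‖⁻¹ • q⟫ / τ₁) q₁‖ ^ 2
      = ‖d‖ ^ 2 / (τ₁ ^ 2 * ‖q₁‖ ^ 2) *
          (1 - ⟪‖q₁‖⁻¹ • q₁, ‖d‖⁻¹ • d⟫ ^ 2) := by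
  have hr : (0:ℝ) < ‖q₁‖ := norm_pos_iff.mpr hq
  have hqtnorm : ‖‖q₁‖⁻¹ • q₁‖ = 1 := norm_smul_inv_norm hq
  -- Part 1
  have hout' : HasFDerivAt (fun u : EuclideanSpace ℝ (Fin C) =>
      Real.log (∑ j, Real.exp (u j / τ₁)) - ⟪softmax11 τ₂ z₂, u⟫ / τ₁)
      (InnerProductSpace.toDual ℝ _ ((1 / τ₁) • d)) (‖q₁‖⁻¹ • q₁) := by
    rw [hd]; exact core_hasFDerivAt hC τ₁ hτ₁ (softmax11 τ₂ z₂) (‖q₁‖⁻¹ • q₁)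
  have part1 : gradient (fun u : EuclideanSpace ℝ (Fin C) =>
      Real.log (∑ j, Real.exp (u j / τ₁)) - ⟪softmax11 τ₂ z₂, u⟫ / τ₁)
      (‖q₁‖⁻¹ • q₁) = (1 / τ₁) • d := by
    have h := (hasFDerivAt_iff_hasGradientAt.mp hout').gradient
    rwa [LinearIsometryEquiv.symm_apply_apply] at h
  refine ⟨part1, ?_⟩
  -- derivative of the norm
  have hnsq : HasFDerivAt (fun q : EuclideanSpace ℝ (Fin C) => ‖q‖ ^ 2)
      (2 • innerSL ℝ q₁) q₁ := (hasStrictFDerivAt_norm_sq q₁).hasFDerivAt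
  have hsqrt := (Real.hasDerivAt_sqrt (by positivity : ‖q₁‖ ^ 2 ≠ 0)).comp_hasFDerivAt q₁ hnsq
  have hnorm : HasFDerivAt (fun q : EuclideanSpace ℝ (Fin C) => ‖q‖)
      (‖q₁‖⁻¹ • innerSL ℝ q₁) q₁ := by
    have hfun : (fun q : EuclideanSpace ℝ (Fin C) => ‖q‖)
        = fun q : EuclideanSpace ℝ (Fin C) => Real.sqrt (‖q‖ ^ 2) :=
      funext fun q => (Real.sqrt_sq (norm_nonneg q)).symm
    rw [hfun]
    refine hsqrt.congr_fderiv (Eq.symm ?_)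
    ext h
    rw [Real.sqrt_sq hr.le]
    simp only [ContinuousLinearMap.smul_apply, smul_eq_mul, two_smul,
      ContinuousLinearMap.add_apply]
    field_simp
    ring
  have hinv : HasFDerivAt (fun q : EuclideanSpace ℝ (Fin C) => ‖q‖⁻¹)
      ((-(‖q₁‖ ^ 2)⁻¹) • (‖q₁‖⁻¹ • innerSL ℝ q₁)) q₁ :=
    (hasDerivAt_inv hr.ne').comp_hasFDerivAt q₁ hnorm
  have hN : HasFDerivAt (fun q : EuclideanSpace ℝ (Fin C) => ‖q‖⁻¹ • q)
      (‖q₁‖⁻¹ • ContinuousLinearMap.id ℝ (EuclideanSpace ℝ (Fin C)) +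
        ((-(‖q₁‖ ^ 2)⁻¹) • (‖q₁‖⁻¹ • innerSL ℝ q₁)).smulRight q₁) q₁ :=
    hinv.smul (hasFDerivAt_id q₁)
  have hcomp := HasFDerivAt.comp (f := fun q : EuclideanSpace ℝ (Fin C) => ‖q‖⁻¹ • q) q₁ hout' hN
  have hkey : ((InnerProductSpace.toDual ℝ _ ((1 / τ₁) • d)).comp
      (‖q₁‖⁻¹ • ContinuousLinearMap.id ℝ (EuclideanSpace ℝ (Fin C)) +
        ((-(‖q₁‖ ^ 2)⁻¹) • (‖q₁‖⁻¹ • innerSL ℝ q₁)).smulRight q₁))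
      = InnerProductSpace.toDual ℝ _
          (‖q₁‖⁻¹ • ((1 / τ₁) • d - ⟪‖q₁‖⁻¹ • q₁, (1 / τ₁) • d⟫ • (‖q₁‖⁻¹ • q₁))) := by
    ext h
    simp only [ContinuousLinearMap.comp_apply, ContinuousLinearMap.add_apply,
      ContinuousLinearMap.smul_apply, ContinuousLinearMap.coe_id', id_eq,
      ContinuousLinearMap.smulRight_apply, innerSL_apply_apply, smul_eq_mul,
      InnerProductSpace.toDual_apply_apply]
    simp only [inner_add_right, inner_sub_left, real_inner_smul_left, real_inner_smul_right]
    rw [real_inner_comm d q₁]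
    field_simp
    ring
  have part2grad : gradient (fun q : EuclideanSpace ℝ (Fin C) =>
      Real.log (∑ j, Real.exp ((‖q‖⁻¹ • q) j / τ₁))
        - ⟪softmax11 τ₂ z₂, ‖q‖⁻¹ • q⟫ / τ₁) q₁
      = ‖q₁‖⁻¹ • ((1 / τ₁) • d - ⟪‖q₁‖⁻¹ • q₁, (1 / τ₁) • d⟫ • (‖q₁‖⁻¹ • q₁)) := by
    have hF : HasFDerivAt (fun q : EuclideanSpace ℝ (Fin C) =>
        Real.log (∑ j, Real.exp ((‖q‖⁻¹ • q) j / τ₁))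
          - ⟪softmax11 τ₂ z₂, ‖q‖⁻¹ • q⟫ / τ₁)
        (InnerProductSpace.toDual ℝ _
          (‖q₁‖⁻¹ • ((1 / τ₁) • d - ⟪‖q₁‖⁻¹ • q₁, (1 / τ₁) • d⟫ • (‖q₁‖⁻¹ • q₁)))) q₁ := by
      rw [← hkey]; exact hcomp
    have h := (hasFDerivAt_iff_hasGradientAt.mp hF).gradient
    rwa [LinearIsometryEquiv.symm_apply_apply] at h
  rw [part2grad]
  -- norm computation
  have hdn : (0:ℝ) < ‖d‖ := norm_pos_iff.mpr hd0
  have hsub : ‖(1 / τ₁) • d - ⟪‖q₁‖⁻¹ • q₁, (1 / τ₁) • d⟫ • (‖q₁‖⁻¹ • q₁)‖ ^ 2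
      = ‖(1 / τ₁) • d‖ ^ 2 - ⟪‖q₁‖⁻¹ • q₁, (1 / τ₁) • d⟫ ^ 2 := by
    rw [norm_sub_sq_real, real_inner_smul_right,
      norm_smul (inner ℝ (‖q₁‖⁻¹ • q₁) ((1 / τ₁) • d) : ℝ) (‖q₁‖⁻¹ • q₁), hqtnorm, mul_one,
      Real.norm_eq_abs, sq_abs]
    have hcomm : ⟪(1 / τ₁) • d, ‖q₁‖⁻¹ • q₁⟫ = ⟪‖q₁‖⁻¹ • q₁, (1 / τ₁) • d⟫ :=
      real_inner_comm _ _
    rw [hcomm]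
    ring
  rw [norm_smul, mul_pow, hsub]
  have hn1 : ‖(1 / τ₁) • d‖ ^ 2 = (1 / τ₁) ^ 2 * ‖d‖ ^ 2 := by
    rw [norm_smul, mul_pow, Real.norm_eq_abs, sq_abs]
  rw [hn1, inner_smul_right (𝕜 := ℝ), inner_smul_right (𝕜 := ℝ),
    Real.norm_eq_abs, sq_abs]
  field_simp
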